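/- Let p ≥ 0 and m ≥ 0 be integers. Then the function τ ↦ ((1−τ)/2)^p ((1+τ)/2)^p · P_m^{(p,p)}(τ) solves the ODE (1−τ²) a''(τ) + 2(p−1)τ a'(τ) + (2p+m)(m+1) a(τ) = 0 on (−1,1). -/

import Mathlib

/-- The generalized binomial coefficient `C(y, k) = (∏_{i=0}^{k−1}(y−i)) / k!`
for real `y` and natural `k`. -/
noncomputable def genBinom (y : ℝ) (k : ℕ) : ℝ :=
  (∏ i ∈ Finset.range k, (y - (i : ℝ))) / (Nat.factorial k : ℝ)

/-- The Jacobi polynomial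
`P_n^{(α,β)}(x) = Σ_{l=0}^{n} C(n+α, l) C(n+β, n−l) ((x−1)/2)^{n−l} ((x+1)/2)^l`. -/
noncomputable def jacobiP (n : ℕ) (α β : ℝ) (x : ℝ) : ℝ :=
  ∑ l ∈ Finset.range (n + 1),
    genBinom ((n : ℝ) + α) l * genBinom ((n : ℝ) + β) (n - l) *
      ((x - 1) / 2) ^ (n - l) * ((x + 1) / 2) ^ l

/-! ### Auxiliary development -/

lemma genBinom_natCast (n k : ℕ) : genBinom (n : ℝ) k = (n.choose k : ℝ) := by
  unfold genBinom
  rcases le_or_gt k n with h | h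
  · have hprod : ((n.descFactorial k : ℕ) : ℝ) = ∏ i ∈ Finset.range k, ((n : ℝ) - (i : ℝ)) := by
      rw [Nat.descFactorial_eq_prod_range, Nat.cast_prod]
      exact Finset.prod_congr rfl fun i hi =>
        Nat.cast_sub ((Finset.mem_range.mp hi).le.trans h)
    rw [← hprod, Nat.descFactorial_eq_factorial_mul_choose]
    push_cast
    field_simp
  · rw [Finset.prod_eq_zero (Finset.mem_range.mpr h) (by simp), Nat.choose_eq_zero_of_lt h]
    simp

/-- coefficient of the Jacobi polynomial -/
noncomputable def cJ (p m l : ℕ) : ℝ :=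
  genBinom ((m : ℝ) + (p : ℝ)) l * genBinom ((m : ℝ) + (p : ℝ)) (m - l)

lemma cJ_eq (p m l : ℕ) : cJ p m l = ((m + p).choose l : ℝ) * ((m + p).choose (m - l) : ℝ) := by
  have hc : ((m : ℝ) + (p : ℝ)) = (((m + p : ℕ)) : ℝ) := by push_cast; ring
  rw [cJ, hc, genBinom_natCast, genBinom_natCast]

lemma RoneNat (p m l : ℕ) (hl : l < m) :
    (m + p).choose (l + 1) * (m + p).choose (m - (l + 1)) * ((l + 1) * (p + l + 1))
      = (m + p).choose l * (m + p).choose (m - l) * ((p + (m - l)) * (m - l)) := by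
  have h1 := Nat.choose_succ_right_eq (m + p) l
  have h2 := Nat.choose_succ_right_eq (m + p) (m - l - 1)
  have e1 : m - l - 1 + 1 = m - l := by omega
  have e2 : m + p - (m - l - 1) = p + l + 1 := by omega
  have e3 : m + p - l = p + (m - l) := by omega
  rw [e1, e2] at h2
  rw [e3] at h1
  have e4 : m - (l + 1) = m - l - 1 := by omega
  rw [e4]
  calc (m + p).choose (l + 1) * (m + p).choose (m - l - 1) * ((l + 1) * (p + l + 1))
      = ((m + p).choose (l + 1) * (l + 1)) * ((m + p).choose (m - l - 1) * (p + l + 1)) := by ring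
    _ = ((m + p).choose l * (p + (m - l))) * ((m + p).choose (m - l) * (m - l)) := by
        rw [h1, ← h2]
    _ = (m + p).choose l * (m + p).choose (m - l) * ((p + (m - l)) * (m - l)) := by ring

lemma Rone (p m l : ℕ) (hl : l < m) :
    cJ p m (l + 1) * (((l : ℝ) + 1) * ((p : ℝ) + (l : ℝ) + 1))
      = cJ p m l * (((p : ℝ) + (m : ℝ) - (l : ℝ)) * ((m : ℝ) - (l : ℝ))) := by
  have key := RoneNat p m l hl
  have e1 : ((p : ℝ) + (m : ℝ) - (l : ℝ)) = (((p + (m - l) : ℕ)) : ℝ) := by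
    push_cast [Nat.cast_sub hl.le]; ring
  have e2 : ((m : ℝ) - (l : ℝ)) = (((m - l : ℕ)) : ℝ) := by
    push_cast [Nat.cast_sub hl.le]
    ring
  have e3 : ((l : ℝ) + 1) = (((l + 1 : ℕ)) : ℝ) := by push_cast; ring
  have e4 : ((p : ℝ) + (l : ℝ) + 1) = (((p + l + 1 : ℕ)) : ℝ) := by push_cast; ring
  rw [cJ_eq, cJ_eq, e1, e2, e3, e4]
  exact_mod_cast congrArg (Nat.cast : ℕ → ℝ) key

/-- the basic power function -/
noncomputable def pwF (j k : ℕ) (t : ℝ) : ℝ := ((t - 1) / 2) ^ j * ((t + 1) / 2) ^ k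

noncomputable def pwF' (j k : ℕ) (t : ℝ) : ℝ :=
  (j : ℝ) / 2 * pwF (j - 1) k t + (k : ℝ) / 2 * pwF j (k - 1) t

noncomputable def pwF'' (j k : ℕ) (t : ℝ) : ℝ :=
  (j : ℝ) / 2 * pwF' (j - 1) k t + (k : ℝ) / 2 * pwF' j (k - 1) t

lemma hasDerivAt_pwF (j k : ℕ) (t : ℝ) : HasDerivAt (pwF j k) (pwF' j k t) t := by
  have h1 : HasDerivAt (fun t : ℝ => (t - 1) / 2) ((1 : ℝ) / 2) t := by
    simpa using ((hasDerivAt_id t).sub_const 1).div_const 2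
  have h2 : HasDerivAt (fun t : ℝ => (t + 1) / 2) ((1 : ℝ) / 2) t := by
    simpa using ((hasDerivAt_id t).add_const 1).div_const 2
  have := (h1.pow j).mul (h2.pow k)
  refine this.congr_deriv ?_
  unfold pwF' pwF
  simp only [Pi.pow_apply]
  ring

lemma hasDerivAt_pwF' (j k : ℕ) (t : ℝ) : HasDerivAt (pwF' j k) (pwF'' j k t) t := by
  have := ((hasDerivAt_pwF (j - 1) k t).const_mul ((j : ℝ) / 2)).add
    ((hasDerivAt_pwF j (k - 1) t).const_mul ((k : ℝ) / 2))
  exact this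

lemma pw_key (P K : ℝ) (j k : ℕ) (t : ℝ) :
    ((t - 1) / 2 * ((t + 1) / 2)) *
        ((1 - t ^ 2) * pwF'' j k t + 2 * (P - 1) * t * pwF' j k t + K * pwF j k t)
      = (j : ℝ) * (P - (j : ℝ)) * pwF j (k + 2) t
        + ((P - 1) * ((j : ℝ) + (k : ℝ)) - 2 * (j : ℝ) * (k : ℝ) + K) * pwF (j + 1) (k + 1) t
        + (k : ℝ) * (P - (k : ℝ)) * pwF (j + 2) k t := by
  rcases j with _ | _ | j <;> rcases k with _ | _ | k <;>
    · simp only [pwF'', pwF', pwF, Nat.succ_sub_one, Nat.zero_sub, Nat.sub_zero,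
        Nat.succ_eq_add_one]
      push_cast
      ring

noncomputable def gJ (p m : ℕ) (t : ℝ) : ℝ :=
  ∑ l ∈ Finset.range (m + 1), cJ p m l * pwF (p + (m - l)) (p + l) t

noncomputable def gJ' (p m : ℕ) (t : ℝ) : ℝ :=
  ∑ l ∈ Finset.range (m + 1), cJ p m l * pwF' (p + (m - l)) (p + l) t

noncomputable def gJ'' (p m : ℕ) (t : ℝ) : ℝ :=
  ∑ l ∈ Finset.range (m + 1), cJ p m l * pwF'' (p + (m - l)) (p + l) t

lemma hasDerivAt_gJ (p m : ℕ) (t : ℝ) : HasDerivAt (gJ p m) (gJ' p m t) t := by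
  exact HasDerivAt.fun_sum fun l _ => (hasDerivAt_pwF _ _ t).const_mul _

lemma hasDerivAt_gJ' (p m : ℕ) (t : ℝ) : HasDerivAt (gJ' p m) (gJ'' p m t) t := by
  exact HasDerivAt.fun_sum fun l _ => (hasDerivAt_pwF' _ _ t).const_mul _

noncomputable def αc (p m l : ℕ) : ℝ :=
  ((p + (m - l) : ℕ) : ℝ) * ((p : ℝ) - ((p + (m - l) : ℕ) : ℝ))

noncomputable def γc (p l : ℕ) : ℝ :=
  ((p + l : ℕ) : ℝ) * ((p : ℝ) - ((p + l : ℕ) : ℝ))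

noncomputable def βc (p m l : ℕ) : ℝ :=
  ((p : ℝ) - 1) * (((p + (m - l) : ℕ) : ℝ) + ((p + l : ℕ) : ℝ))
    - 2 * ((p + (m - l) : ℕ) : ℝ) * ((p + l : ℕ) : ℝ)
    + (2 * (p : ℝ) + (m : ℝ)) * ((m : ℝ) + 1)

lemma bracket_zero (p m : ℕ) : ∀ l ∈ Finset.range (m + 1),
    (if l = 0 then (0 : ℝ) else cJ p m (l - 1) * αc p m (l - 1)) + cJ p m l * βc p m l
      + (if l = m then (0 : ℝ) else cJ p m (l + 1) * γc p (l + 1)) = 0 := by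
  intro l hl
  have hlm : l ≤ m := Nat.lt_succ_iff.mp (Finset.mem_range.mp hl)
  have hA : (if l = 0 then (0 : ℝ) else cJ p m (l - 1) * αc p m (l - 1))
      = -(cJ p m l * ((l : ℝ) * ((p : ℝ) + (l : ℝ)))) := by
    rcases l with _ | l'
    · simp
    · have hl' : l' < m := Nat.lt_of_succ_le hlm
      rw [if_neg (Nat.succ_ne_zero l'), Nat.succ_sub_one]
      have hα : αc p m l' = ((p : ℝ) + (m : ℝ) - (l' : ℝ))
          * ((p : ℝ) - ((p : ℝ) + ((m : ℝ) - (l' : ℝ)))) := by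
        rw [αc, Nat.cast_add, Nat.cast_sub hl'.le]
        ring
      rw [hα]
      push_cast
      linear_combination Rone p m l' hl'
  have hC : (if l = m then (0 : ℝ) else cJ p m (l + 1) * γc p (l + 1))
      = -(cJ p m l * (((p : ℝ) + (m : ℝ) - (l : ℝ)) * ((m : ℝ) - (l : ℝ)))) := by
    by_cases hlm' : l = m
    · subst hlm'
      rw [if_pos rfl]
      ring
    · have hl' : l < m := lt_of_le_of_ne hlm hlm'
      rw [if_neg hlm', γc]
      push_cast
      linear_combination (-1 : ℝ) * Rone p m l hl'
  rw [hA, hC, βc, Nat.cast_add, Nat.cast_sub hlm, Nat.cast_add]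
  ring

/-! ### The theorem -/

/-- The function `τ ↦ ((1−τ)/2)^p ((1+τ)/2)^p P_m^{(p,p)}(τ)` solves the Jacobi-type ODE
`(1−τ²)a'' + 2(p−1)τ a' + (2p+m)(m+1) a = 0` on `(−1,1)`. -/
theorem stmt12 (p m : ℕ) :
    let a : ℝ → ℝ := fun τ => ((1 - τ) / 2) ^ p * ((1 + τ) / 2) ^ p * jacobiP m (p : ℝ) (p : ℝ) τ
    ∀ τ ∈ Set.Ioo (-1 : ℝ) 1,
      (1 - τ ^ 2) * deriv (deriv a) τ + 2 * ((p : ℝ) - 1) * τ * deriv a τ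
        + (2 * (p : ℝ) + (m : ℝ)) * ((m : ℝ) + 1) * a τ = 0 := by
  intro a τ hτ
  have hu : ((τ - 1) / 2 : ℝ) ≠ 0 :=
    div_ne_zero (sub_ne_zero.mpr hτ.2.ne) two_ne_zero
  have hv : ((τ + 1) / 2 : ℝ) ≠ 0 :=
    ne_of_gt (by have := hτ.1; linarith : (0 : ℝ) < (τ + 1) / 2)
  -- rewrite a in terms of gJ
  have ha : a = fun t => (-1 : ℝ) ^ p * gJ p m t := by
    funext t
    show ((1 - t) / 2) ^ p * ((1 + t) / 2) ^ p * jacobiP m (p : ℝ) (p : ℝ) t = _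
    unfold jacobiP gJ cJ pwF
    rw [Finset.mul_sum, Finset.mul_sum]
    refine Finset.sum_congr rfl fun l hl => ?_
    have h1 : ((1 - t) / 2 : ℝ) = (-1) * ((t - 1) / 2) := by ring
    rw [h1, mul_pow, pow_add, pow_add]
    ring
  have hg1 : deriv a = fun t => (-1 : ℝ) ^ p * gJ' p m t := by
    funext t
    rw [ha]
    exact ((hasDerivAt_gJ p m t).const_mul _).deriv
  have hg2 : deriv (deriv a) τ = (-1 : ℝ) ^ p * gJ'' p m τ := by
    rw [hg1]
    exact ((hasDerivAt_gJ' p m τ).const_mul _).deriv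
  have hg1τ : deriv a τ = (-1 : ℝ) ^ p * gJ' p m τ := by rw [hg1]
  have haτ : a τ = (-1 : ℝ) ^ p * gJ p m τ := by rw [ha]
  rw [hg2, hg1τ, haτ]
  have main : (1 - τ ^ 2) * gJ'' p m τ + 2 * ((p : ℝ) - 1) * τ * gJ' p m τ
      + (2 * (p : ℝ) + (m : ℝ)) * ((m : ℝ) + 1) * gJ p m τ = 0 := by
    have huv : ((τ - 1) / 2 : ℝ) * ((τ + 1) / 2) ≠ 0 := mul_ne_zero hu hv
    suffices hS : ((τ - 1) / 2 : ℝ) * ((τ + 1) / 2) *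
        ((1 - τ ^ 2) * gJ'' p m τ + 2 * ((p : ℝ) - 1) * τ * gJ' p m τ
          + (2 * (p : ℝ) + (m : ℝ)) * ((m : ℝ) + 1) * gJ p m τ) = 0 by
      rcases mul_eq_zero.mp hS with h | h
      · exact absurd h huv
      · exact h
    have expand : ((τ - 1) / 2 : ℝ) * ((τ + 1) / 2) *
        ((1 - τ ^ 2) * gJ'' p m τ + 2 * ((p : ℝ) - 1) * τ * gJ' p m τ
          + (2 * (p : ℝ) + (m : ℝ)) * ((m : ℝ) + 1) * gJ p m τ)
        = ∑ l ∈ Finset.range (m + 1), ((τ - 1) / 2 * ((τ + 1) / 2)) *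
            ((1 - τ ^ 2) * (cJ p m l * pwF'' (p + (m - l)) (p + l) τ)
              + 2 * ((p : ℝ) - 1) * τ * (cJ p m l * pwF' (p + (m - l)) (p + l) τ)
              + (2 * (p : ℝ) + (m : ℝ)) * ((m : ℝ) + 1)
                * (cJ p m l * pwF (p + (m - l)) (p + l) τ)) := by
      unfold gJ gJ' gJ''
      rw [Finset.mul_sum, Finset.mul_sum, Finset.mul_sum, ← Finset.sum_add_distrib,
        ← Finset.sum_add_distrib, Finset.mul_sum]
    rw [expand]
    have step2 : ∀ l ∈ Finset.range (m + 1), ((τ - 1) / 2 * ((τ + 1) / 2)) *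
            ((1 - τ ^ 2) * (cJ p m l * pwF'' (p + (m - l)) (p + l) τ)
              + 2 * ((p : ℝ) - 1) * τ * (cJ p m l * pwF' (p + (m - l)) (p + l) τ)
              + (2 * (p : ℝ) + (m : ℝ)) * ((m : ℝ) + 1)
                * (cJ p m l * pwF (p + (m - l)) (p + l) τ))
        = (cJ p m l * αc p m l) * pwF (p + (m - l)) (p + l + 2) τ
          + (cJ p m l * βc p m l) * pwF (p + (m - l) + 1) (p + l + 1) τ
          + (cJ p m l * γc p l) * pwF (p + (m - l) + 2) (p + l) τ := by
      intro l hl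
      have hk := pw_key (p : ℝ) ((2 * (p : ℝ) + (m : ℝ)) * ((m : ℝ) + 1))
        (p + (m - l)) (p + l) τ
      unfold αc βc γc
      linear_combination (cJ p m l) * hk
    refine (Finset.sum_congr rfl step2).trans ?_
    rw [Finset.sum_add_distrib, Finset.sum_add_distrib]
    have hT1 : ∑ l ∈ Finset.range (m + 1),
          (cJ p m l * αc p m l) * pwF (p + (m - l)) (p + l + 2) τ
        = ∑ l ∈ Finset.range (m + 1),
            (if l = 0 then (0 : ℝ) else cJ p m (l - 1) * αc p m (l - 1))
              * pwF (p + (m - l) + 1) (p + l + 1) τ := by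
      rw [Finset.sum_range_succ, Finset.sum_range_succ']
      have hαm : αc p m m = 0 := by simp [αc]
      simp only [hαm, mul_zero, zero_mul, add_zero, Nat.succ_ne_zero, if_false,
        eq_self_iff_true, if_true, Nat.add_sub_cancel]
      refine Finset.sum_congr rfl fun l hl => ?_
      have hlm : l < m := Finset.mem_range.mp hl
      have e1 : p + (m - (l + 1)) + 1 = p + (m - l) := by omega
      have e2 : p + (l + 1) + 1 = p + l + 2 := by omega
      rw [e1, e2]
    have hT3 : ∑ l ∈ Finset.range (m + 1),
          (cJ p m l * γc p l) * pwF (p + (m - l) + 2) (p + l) τ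
        = ∑ l ∈ Finset.range (m + 1),
            (if l = m then (0 : ℝ) else cJ p m (l + 1) * γc p (l + 1))
              * pwF (p + (m - l) + 1) (p + l + 1) τ := by
      rw [Finset.sum_range_succ', Finset.sum_range_succ]
      have hγ0 : γc p 0 = 0 := by simp [γc]
      simp only [hγ0, mul_zero, zero_mul, add_zero, eq_self_iff_true, if_true]
      refine Finset.sum_congr rfl fun l hl => ?_
      have hlm : l < m := Finset.mem_range.mp hl
      have e1 : p + (m - (l + 1)) + 2 = p + (m - l) + 1 := by omega
      have e2 : p + (l + 1) = p + l + 1 := by omega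
      rw [e1, e2, if_neg (Nat.ne_of_lt hlm)]
    rw [hT1, hT3, ← Finset.sum_add_distrib, ← Finset.sum_add_distrib]
    refine Finset.sum_eq_zero fun l hl => ?_
    have hz := bracket_zero p m l hl
    linear_combination (pwF (p + (m - l) + 1) (p + l + 1) τ) * hz
  linear_combination ((-1 : ℝ) ^ p) * main
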